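/- Let H be a complex Hilbert space, B ∈ B(H), λ ∈ ℂ with |λ| > ‖B‖, and x, y ∈ H with ⟨x, y⟩ = 0. Then λ(I + xy*) − B is invertible if and only if ⟨B(λI − B)^{-1}x, y⟩ ≠ −1. -/

import Mathlib

/-- The rank-one operator `xy*` given by `z ↦ ⟨z, y⟩ x` (inner product linear in the
first argument, i.e. `⟪y, z⟫` in Mathlib's convention). -/
noncomputable def outer {H : Type*} [NormedAddCommGroup H] [InnerProductSpace ℂ H]
    (x y : H) : H →L[ℂ] H :=
  (ContinuousLinearMap.toSpanSingleton ℂ x).comp (innerSL ℂ y)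

lemma outer_apply {H : Type*} [NormedAddCommGroup H] [InnerProductSpace ℂ H]
    (x y z : H) : outer x y z = (inner ℂ y z : ℂ) • x := by
  simp [outer, ContinuousLinearMap.toSpanSingleton_apply]

lemma outer_mul_outer {H : Type*} [NormedAddCommGroup H] [InnerProductSpace ℂ H]
    (u v : H) : outer u v * outer u v = (inner ℂ v u : ℂ) • outer u v := by
  ext z
  simp [ContinuousLinearMap.mul_apply, outer_apply, smul_smul, mul_comm]

lemma isUnit_one_add_outer {H : Type*} [NormedAddCommGroup H] [InnerProductSpace ℂ H]
    (u v : H) : IsUnit (1 + outer u v) ↔ (1 + (inner ℂ v u : ℂ)) ≠ 0 := by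
  set c : ℂ := inner ℂ v u with hc
  constructor
  · rintro ⟨U, hU⟩ h0
    have hu : u ≠ 0 := by
      intro h; rw [h] at hc; simp [hc] at h0
    have hTu : (1 + outer u v) u = 0 := by
      have : (1 + outer u v) u = (1 + c) • u := by
        simp [ContinuousLinearMap.add_apply, outer_apply, add_smul, hc]
      rw [this, h0, zero_smul]
    have : u = 0 := by
      have h1 : (↑U⁻¹ * ↑U : H →L[ℂ] H) u = u := by
        rw [U.inv_mul]; simp
      rw [ContinuousLinearMap.mul_apply, hU, hTu, map_zero] at h1
      exact h1.symm
    exact hu this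
  · intro h0
    set d : ℂ := (1 + c)⁻¹ with hd
    set T := outer u v with hT
    have hdc : d + d * c = 1 := by
      rw [← mul_one_add, hd]
      field_simp
    have hmul1 : (1 + T) * (1 - d • T) = 1 := by
      have h : (1 + T) * (1 - d • T) = 1 + T - (d • T + d • (T * T)) := by
        rw [mul_sub, mul_one, add_mul, one_mul, mul_smul_comm]
      rw [h, outer_mul_outer, ← hc, smul_smul, ← add_smul, hdc, one_smul]
      abel
    have hmul2 : (1 - d • T) * (1 + T) = 1 := by
      have h : (1 - d • T) * (1 + T) = 1 + T - (d • T + d • (T * T)) := by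
        rw [sub_mul, one_mul, mul_add, mul_one, smul_mul_assoc]
      rw [h, outer_mul_outer, ← hc, smul_smul, ← add_smul, hdc, one_smul]
      abel
    exact ⟨⟨1 + T, 1 - d • T, hmul1, hmul2⟩, rfl⟩

theorem stmt_15 (H : Type*) [NormedAddCommGroup H] [InnerProductSpace ℂ H] [CompleteSpace H]
    (B : H →L[ℂ] H) (l : ℂ) (hl : ‖B‖ < ‖l‖)
    (x y : H) (hxy : inner ℂ y x = (0 : ℂ)) :
    IsUnit (l • (1 + outer x y) - B) ↔
      inner ℂ y ((B * Ring.inverse (l • (1 : H →L[ℂ] H) - B)) x) ≠ (-1 : ℂ) := by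
  set A : H →L[ℂ] H := l • (1 : H →L[ℂ] H) - B with hA
  have hl0 : l ≠ 0 := by
    intro h
    rw [h, norm_zero] at hl
    exact absurd hl (not_lt.mpr (norm_nonneg B))
  have hAu : IsUnit A := by
    have h1 : IsUnit (1 - l⁻¹ • B : H →L[ℂ] H) := by
      apply isUnit_one_sub_of_norm_lt_one
      rw [norm_smul, norm_inv]
      rw [inv_mul_lt_one₀ (lt_of_le_of_lt (norm_nonneg B) hl)]
      exact hl
    have hlu : IsUnit (l • (1 : H →L[ℂ] H)) :=
      ⟨⟨l • 1, l⁻¹ • 1, by rw [smul_mul_smul_comm, mul_inv_cancel₀ hl0, one_mul, one_smul],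
        by rw [smul_mul_smul_comm, inv_mul_cancel₀ hl0, one_mul, one_smul]⟩, rfl⟩
    have heq : A = (l • (1 : H →L[ℂ] H)) * (1 - l⁻¹ • B) := by
      rw [smul_mul_assoc, one_mul, smul_sub, smul_smul, mul_inv_cancel₀ hl0, one_smul]
    rw [heq]
    exact hlu.mul h1
  set R : H →L[ℂ] H := Ring.inverse A with hR
  have hAR : A * R = 1 := Ring.mul_inverse_cancel A hAu
  have hARx : A (R x) = x := by
    rw [← ContinuousLinearMap.mul_apply, hAR, ContinuousLinearMap.one_apply]
  have hfact : l • (1 + outer x y) - B = A * (1 + outer (l • R x) y) := by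
    have h1 : A * outer (l • R x) y = l • outer x y := by
      ext z
      simp only [ContinuousLinearMap.mul_apply, outer_apply,
        ContinuousLinearMap.smul_apply, map_smul, hARx]
      rw [smul_comm]
    rw [mul_add, mul_one, h1, hA, smul_add]
    abel
  have hBRx : B (R x) = l • R x - x := by
    have : B = l • (1 : H →L[ℂ] H) - A := by rw [hA]; abel
    rw [this]
    simp [hARx]
  rw [hfact]
  obtain ⟨U, hU⟩ := hAu
  rw [← hU, Units.isUnit_units_mul, isUnit_one_add_outer]
  have hrhs : (inner ℂ y ((B * R) x) : ℂ) = l * inner ℂ y (R x) := by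
    rw [ContinuousLinearMap.mul_apply, hBRx, inner_sub_right, inner_smul_right, hxy,
      sub_zero]
  rw [hrhs, inner_smul_right]
  constructor
  · intro h h'
    apply h
    rw [h']
    ring
  · intro h h'
    apply h
    linear_combination h'
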